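/- Let φ_1,…,φ_N and ψ_1,…,ψ_N be functions in L²(Ω,μ) and f ∈ L^∞(Ω,μ). Then (1/N!) ∫_{Ω^N} det(φ_j(x_k)) · det(ψ_j(x_k)) · ∏_j f(x_j) dμ(x_j) = det( ∫_Ω φ_j(x) ψ_k(x) f(x) dμ(x) )_{j,k=1}^N (the Andréief identity). -/

import Mathlib

open MeasureTheory

lemma perm_double_sum_det {N : ℕ} (M : Matrix (Fin N) (Fin N) ℂ) :
    ∑ σ : Equiv.Perm (Fin N), ∑ τ : Equiv.Perm (Fin N),
      ((Equiv.Perm.sign σ : ℤ) : ℂ) * ((Equiv.Perm.sign τ : ℤ) : ℂ) * ∏ k, M (σ k) (τ k)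
    = (N.factorial : ℂ) * M.det := by
  have h : ∀ σ : Equiv.Perm (Fin N), (∑ τ : Equiv.Perm (Fin N),
      ((Equiv.Perm.sign σ : ℤ) : ℂ) * ((Equiv.Perm.sign τ : ℤ) : ℂ) * ∏ k, M (σ k) (τ k))
      = M.det := by
    intro σ
    rw [← Fintype.sum_equiv (Equiv.mulRight σ)
      (fun π : Equiv.Perm (Fin N) => ((Equiv.Perm.sign σ : ℤ) : ℂ) *
        ((Equiv.Perm.sign (π * σ) : ℤ) : ℂ) * ∏ k, M (σ k) ((π * σ) k))
      (fun τ : Equiv.Perm (Fin N) => ((Equiv.Perm.sign σ : ℤ) : ℂ) *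
        ((Equiv.Perm.sign τ : ℤ) : ℂ) * ∏ k, M (σ k) (τ k)) (fun π => rfl)]
    have key : ∀ π : Equiv.Perm (Fin N),
        ((Equiv.Perm.sign σ : ℤ) : ℂ) * ((Equiv.Perm.sign (π * σ) : ℤ) : ℂ) *
          ∏ k, M (σ k) ((π * σ) k)
        = ((Equiv.Perm.sign π : ℤ) : ℂ) * ∏ j, M j (π j) := by
      intro π
      have h1 : ∏ k, M (σ k) ((π * σ) k) = ∏ j, M j (π j) := by
        simpa using Equiv.prod_comp σ (fun j => M j (π j))
      rw [h1, Equiv.Perm.sign_mul]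
      have h2 : ((Equiv.Perm.sign σ : ℤ) : ℂ) * ((Equiv.Perm.sign σ : ℤ) : ℂ) = 1 := by
        rcases Int.units_eq_one_or (Equiv.Perm.sign σ) with h | h <;> rw [h] <;> norm_num
      push_cast
      ring_nf
      rw [show ((Equiv.Perm.sign σ : ℤ) : ℂ) ^ 2 = 1 by rw [sq]; exact h2]
      ring
    simp_rw [key]
    rw [← Matrix.det_transpose M, Matrix.det_apply']
    rfl
  simp_rw [h, Finset.sum_const, Finset.card_univ, Fintype.card_perm, Fintype.card_fin,
    nsmul_eq_mul]

/-- Andréief's identity. -/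
theorem andreief {Ω : Type*} [MeasurableSpace Ω] (μ : Measure Ω) [SigmaFinite μ]
    (N : ℕ) (φ ψ : Fin N → Ω → ℂ) (f : Ω → ℂ)
    (hφ : ∀ j, MemLp (φ j) 2 μ) (hψ : ∀ j, MemLp (ψ j) 2 μ)
    (hf : MemLp f ⊤ μ) :
    ((N.factorial : ℂ))⁻¹ *
      ∫ x : Fin N → Ω,
        (Matrix.det (Matrix.of fun j k => φ j (x k))) *
        (Matrix.det (Matrix.of fun j k => ψ j (x k))) *
        (∏ j, f (x j)) ∂(Measure.pi fun _ => μ)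
    = Matrix.det (Matrix.of fun j k => ∫ t, φ j t * ψ k t * f t ∂μ) := by
  classical
  have hint : ∀ j k, Integrable (fun t => φ j t * ψ k t * f t) μ := by
    intro j k
    have h1 : MemLp (fun t => φ j t * ψ k t) 1 μ := by
      have := (hψ k).smul (hφ j) (p := 2) (q := 2) (r := 1)
      exact this
    have h2 : MemLp (fun t => φ j t * ψ k t * f t) 1 μ := by
      have := MemLp.smul h1 hf (p := ⊤) (q := 1) (r := 1)
      convert this using 1
      funext t
      simp only [Pi.smul_apply, smul_eq_mul, Pi.mul_apply]
      ring
    exact memLp_one_iff_integrable.mp h2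
  letI : MeasureSpace Ω := ⟨μ⟩
  haveI : SigmaFinite (volume : Measure Ω) := ‹SigmaFinite μ›
  have hterm : ∀ σ τ : Equiv.Perm (Fin N), Integrable (fun x : Fin N → Ω =>
      ((Equiv.Perm.sign σ : ℤ) : ℂ) * ((Equiv.Perm.sign τ : ℤ) : ℂ) *
        ∏ k, (φ (σ k) (x k) * ψ (τ k) (x k) * f (x k))) (Measure.pi fun _ => μ) := by
    intro σ τ
    exact (Integrable.fintype_prod (E := Ω)
      (f := fun k t => φ (σ k) t * ψ (τ k) t * f t)
      (fun k => hint (σ k) (τ k))).const_mul _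
  have expand : ∀ x : Fin N → Ω,
      (Matrix.det (Matrix.of fun j k => φ j (x k))) *
      (Matrix.det (Matrix.of fun j k => ψ j (x k))) * (∏ j, f (x j))
      = ∑ σ : Equiv.Perm (Fin N), ∑ τ : Equiv.Perm (Fin N),
          ((Equiv.Perm.sign σ : ℤ) : ℂ) * ((Equiv.Perm.sign τ : ℤ) : ℂ) *
          ∏ k, (φ (σ k) (x k) * ψ (τ k) (x k) * f (x k)) := by
    intro x
    rw [Matrix.det_apply', Matrix.det_apply', Finset.sum_mul, Finset.sum_mul]
    refine Finset.sum_congr rfl fun σ _ => ?_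
    rw [Finset.mul_sum, Finset.sum_mul]
    refine Finset.sum_congr rfl fun τ _ => ?_
    simp only [Matrix.of_apply]
    simp_rw [Finset.prod_mul_distrib]
    ring
  calc ((N.factorial : ℂ))⁻¹ *
      ∫ x : Fin N → Ω,
        (Matrix.det (Matrix.of fun j k => φ j (x k))) *
        (Matrix.det (Matrix.of fun j k => ψ j (x k))) *
        (∏ j, f (x j)) ∂(Measure.pi fun _ => μ)
      = ((N.factorial : ℂ))⁻¹ *
        ∑ σ : Equiv.Perm (Fin N), ∑ τ : Equiv.Perm (Fin N),
          ((Equiv.Perm.sign σ : ℤ) : ℂ) * ((Equiv.Perm.sign τ : ℤ) : ℂ) *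
          ∏ k, ∫ t, φ (σ k) t * ψ (τ k) t * f t ∂μ := by
        congr 1
        simp_rw [expand]
        rw [integral_finset_sum _ (fun σ _ => integrable_finset_sum _ (fun τ _ => hterm σ τ))]
        refine Finset.sum_congr rfl fun σ _ => ?_
        rw [integral_finset_sum _ (fun τ _ => hterm σ τ)]
        refine Finset.sum_congr rfl fun τ _ => ?_
        rw [integral_const_mul]
        congr 1
        exact MeasureTheory.integral_fintype_prod_eq_prod (ι := Fin N)
          (fun k t => φ (σ k) t * ψ (τ k) t * f t)
    _ = Matrix.det (Matrix.of fun j k => ∫ t, φ j t * ψ k t * f t ∂μ) := by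
        have hd := perm_double_sum_det (Matrix.of fun j k => ∫ t, φ j t * ψ k t * f t ∂μ)
        simp only [Matrix.of_apply] at hd
        rw [hd]
        rw [← mul_assoc, inv_mul_cancel₀ (by exact_mod_cast N.factorial_ne_zero), one_mul]
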